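/- Let V be a complex Hilbert space, B a bounded, modulus-coercive sesquilinear form on V with bound C_B and coercivity constant α, π : V → V a continuous linear projection with range V_H and kernel W, K : V_H → W the ideal corrector, and F a continuous antilinear functional on V. Let u ∈ V solve B(u, v) = F(v) for all v ∈ V and let G(F) ∈ W be the Green's corrector. Let K_m : V_H → W be a continuous linear map and ε ≥ 0 be such that ‖K(v_H) − K_m(v_H)‖ ≤ ε‖v_H‖ for all v_H ∈ V_H. Then there exists a unique u_{H,m} ∈ V_H solving B((I + K_m)(u_{H,m}), (I + K_m)(v)) = F((I + K_m)(v)) for all v ∈ V_H, and it satisfies ‖u − (I + K_m)(u_{H,m})‖ ≤ (C_B/α)(‖G(F)‖ + ε‖π u‖). -/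

import Mathlib

open scoped ComplexConjugate
open InnerProductSpace

local notation "⟪" x ", " y "⟫" => @inner ℂ _ _ x y

theorem aux_complex_lax_milgram
    {H : Type*} [NormedAddCommGroup H] [InnerProductSpace ℂ H] [CompleteSpace H]
    (a : H → H → ℂ) (M α' : ℝ) (hα' : 0 < α')
    (hadd₁ : ∀ x x' y : H, a (x + x') y = a x y + a x' y)
    (hsmul₁ : ∀ (c : ℂ) (x y : H), a (c • x) y = c * a x y)
    (hadd₂ : ∀ x y y' : H, a x (y + y') = a x y + a x y')
    (hsmul₂ : ∀ (c : ℂ) (x y : H), a x (c • y) = (starRingEnd ℂ) c * a x y)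
    (hbound : ∀ x y : H, ‖a x y‖ ≤ M * ‖x‖ * ‖y‖)
    (hcoer : ∀ x : H, α' * ‖x‖ ^ 2 ≤ ‖a x x‖)
    (f : H → ℂ) (Mf : ℝ)
    (hfadd : ∀ y y' : H, f (y + y') = f y + f y')
    (hfsmul : ∀ (c : ℂ) (y : H), f (c • y) = (starRingEnd ℂ) c * f y)
    (hfbound : ∀ y : H, ‖f y‖ ≤ Mf * ‖y‖) :
    ∃! x : H, ∀ y : H, a x y = f y := by
  classical
  -- bundled sesquilinear form `conj (a x y)`
  let cL : H →ₛₗ[starRingEnd ℂ] H →ₗ[ℂ] ℂ :=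
    LinearMap.mk₂'ₛₗ (starRingEnd ℂ) (RingHom.id ℂ) (fun x y => (starRingEnd ℂ) (a x y))
      (fun x x' y => by rw [hadd₁]; exact map_add _ _ _)
      (fun c x y => by rw [hsmul₁]; simp [smul_eq_mul, map_mul])
      (fun x y y' => by rw [hadd₂]; exact map_add _ _ _)
      (fun c x y => by rw [hsmul₂]; simp [smul_eq_mul, map_mul])
  have hcLb : ∀ x y : H, ‖cL x y‖ ≤ M * ‖x‖ * ‖y‖ := by
    intro x y
    have : ‖(starRingEnd ℂ) (a x y)‖ = ‖a x y‖ := RCLike.norm_conj _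
    simpa [cL, this] using hbound x y
  let cB : H →L⋆[ℂ] H →L[ℂ] ℂ := LinearMap.mkContinuous₂ cL M hcLb
  let A : H →L[ℂ] H := InnerProductSpace.continuousLinearMapOfBilin cB
  have hA : ∀ x y : H, a x y = ⟪y, A x⟫ := by
    intro x y
    have h := InnerProductSpace.continuousLinearMapOfBilin_apply (𝕜 := ℂ) cB x y
    have hc : cB x y = (starRingEnd ℂ) (a x y) := rfl
    rw [← inner_conj_symm, h, hc, Complex.conj_conj]
  -- lower bounds
  have hAlow : ∀ x : H, α' * ‖x‖ ≤ ‖A x‖ := by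
    intro x
    rcases eq_or_ne x 0 with h | h
    · simp [h]
    have h1 : α' * ‖x‖ ^ 2 ≤ ‖x‖ * ‖A x‖ := by
      calc α' * ‖x‖ ^ 2 ≤ ‖a x x‖ := hcoer x
        _ = ‖⟪x, A x⟫‖ := by rw [hA]
        _ ≤ ‖x‖ * ‖A x‖ := norm_inner_le_norm _ _
    have hx : 0 < ‖x‖ := norm_pos_iff.mpr h
    nlinarith
  have hAadj : ∀ x : H, α' * ‖x‖ ≤ ‖ContinuousLinearMap.adjoint A x‖ := by
    intro x
    rcases eq_or_ne x 0 with h | h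
    · simp [h]
    have h1 : α' * ‖x‖ ^ 2 ≤ ‖ContinuousLinearMap.adjoint A x‖ * ‖x‖ := by
      calc α' * ‖x‖ ^ 2 ≤ ‖a x x‖ := hcoer x
        _ = ‖⟪x, A x⟫‖ := by rw [hA]
        _ = ‖⟪ContinuousLinearMap.adjoint A x, x⟫‖ := by
              rw [ContinuousLinearMap.adjoint_inner_left]
        _ ≤ ‖ContinuousLinearMap.adjoint A x‖ * ‖x‖ := norm_inner_le_norm _ _
    have hx : 0 < ‖x‖ := norm_pos_iff.mpr h
    nlinarith
  -- A is surjective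
  have hanti : AntilipschitzWith (⟨α', hα'.le⟩ : NNReal)⁻¹ A := by
    apply ContinuousLinearMap.antilipschitz_of_bound
    intro x
    have := hAlow x
    change ‖x‖ ≤ α'⁻¹ * ‖A x‖
    have hle : ‖x‖ ≤ α'⁻¹ * ‖A x‖ := by
      rw [inv_mul_eq_div, le_div_iff₀ hα']
      linarith [hAlow x]
    simpa using hle
  have hclosed : IsClosed (Set.range A) :=
    (hanti.isClosedEmbedding A.uniformContinuous).isClosed_range
  have hclosed' : IsClosed ((LinearMap.range (A : H →ₗ[ℂ] H) : Submodule ℂ H) : Set H) := by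
    convert hclosed using 1
    ext y; simp
  haveI : CompleteSpace (LinearMap.range (A : H →ₗ[ℂ] H) : Submodule ℂ H) := hclosed'.completeSpace_coe
  have horth : (LinearMap.range (A : H →ₗ[ℂ] H) : Submodule ℂ H)ᗮ = ⊥ := by
    rw [Submodule.eq_bot_iff]
    intro x hx
    have hx' : ∀ y : H, ⟪y, ContinuousLinearMap.adjoint A x⟫ = 0 := by
      intro y
      rw [ContinuousLinearMap.adjoint_inner_right]
      exact hx (A y) (LinearMap.mem_range_self _ y)
    have hadj0 : ContinuousLinearMap.adjoint A x = 0 := by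
      have := hx' (ContinuousLinearMap.adjoint A x)
      exact inner_self_eq_zero.mp this
    have := hAadj x
    rw [hadj0, norm_zero] at this
    have : ‖x‖ ≤ 0 := by nlinarith
    simpa [norm_le_zero_iff] using this
  have hrange : (LinearMap.range (A : H →ₗ[ℂ] H) : Submodule ℂ H) = ⊤ :=
    Submodule.orthogonal_eq_bot_iff.mp horth
  have hsurj : Function.Surjective A := LinearMap.range_eq_top.mp hrange
  -- Riesz representative of f
  let fL : H →ₗ[ℂ] ℂ :=
    { toFun := fun y => (starRingEnd ℂ) (f y)
      map_add' := fun y y' => by rw [hfadd]; exact map_add _ _ _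
      map_smul' := fun c y => by rw [hfsmul]; simp [smul_eq_mul, map_mul] }
  have hfLb : ∀ y : H, ‖fL y‖ ≤ Mf * ‖y‖ := by
    intro y
    have : ‖(starRingEnd ℂ) (f y)‖ = ‖f y‖ := RCLike.norm_conj _
    simpa [fL, this] using hfbound y
  let fC : H →L[ℂ] ℂ := fL.mkContinuous Mf hfLb
  let b : H := (InnerProductSpace.toDual ℂ H).symm fC
  have hb : ∀ y : H, f y = ⟪y, b⟫ := by
    intro y
    have h := InnerProductSpace.toDual_symm_apply (𝕜 := ℂ) (x := y) (y := fC)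
    have hc : fC y = (starRingEnd ℂ) (f y) := rfl
    rw [← inner_conj_symm, h, hc, Complex.conj_conj]
  obtain ⟨x, hx⟩ := hsurj b
  refine ⟨x, fun y => by rw [hA x y, hx]; exact (hb y).symm, ?_⟩
  intro x' hx'
  have hAeq : A x' = A x := by
    apply ext_inner_left ℂ
    intro y
    rw [← hA, ← hA, hx' y, hb, hA x y, hx]
  have h0 : ‖x' - x‖ = 0 := by
    have h1 := hAlow (x' - x)
    rw [map_sub, hAeq, sub_self, norm_zero] at h1
    nlinarith [norm_nonneg (x' - x)]
  rw [← sub_eq_zero]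
  exact norm_eq_zero.mp h0

/-- **Error estimate for the localized multiscale method (abstract form of
Theorem 3.3).** Let `K` be the ideal corrector and `K_m` a continuous linear
map on `V` mapping `V_H = range π` into `W = ker π` with
`‖K v_H - K_m v_H‖ ≤ ε ‖v_H‖` on `V_H`. Then the localized homogenized
equation has a unique solution `u_{H,m} ∈ V_H`, and it satisfies
`‖u - (I + K_m) u_{H,m}‖ ≤ (C_B / α) (‖gF‖ + ε ‖π u‖)`. -/
theorem localized_method_error_estimate
    {V : Type*} [NormedAddCommGroup V] [InnerProductSpace ℂ V] [CompleteSpace V]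
    (B : V → V → ℂ) (C_B α : ℝ) (hC_B : 0 < C_B) (hα : 0 < α)
    (hadd₁ : ∀ u v w : V, B (u + v) w = B u w + B v w)
    (hsmul₁ : ∀ (c : ℂ) (u w : V), B (c • u) w = c * B u w)
    (hadd₂ : ∀ u v w : V, B u (v + w) = B u v + B u w)
    (hsmul₂ : ∀ (c : ℂ) (u w : V), B u (c • w) = (starRingEnd ℂ) c * B u w)
    (hbound : ∀ u v : V, ‖B u v‖ ≤ C_B * ‖u‖ * ‖v‖)
    (hcoer : ∀ v : V, α * ‖v‖ ^ 2 ≤ ‖B v v‖)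
    (π : V →L[ℂ] V) (hπ : ∀ v : V, π (π v) = π v)
    (K : V → V)
    (hK₀ : ∀ vH ∈ Set.range π, π (K vH) = 0)
    (hK : ∀ vH ∈ Set.range π, ∀ w : V, π w = 0 → B (K vH) w = -(B vH w))
    (F : V →L⋆[ℂ] ℂ)
    (u : V) (hu : ∀ v : V, B u v = F v)
    (gF : V) (hgF₀ : π gF = 0) (hgF : ∀ w : V, π w = 0 → B gF w = F w)
    (Km : V →L[ℂ] V) (hKm₀ : ∀ vH ∈ Set.range π, π (Km vH) = 0)
    (ε : ℝ) (hε : 0 ≤ ε)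
    (happrox : ∀ vH ∈ Set.range π, ‖K vH - Km vH‖ ≤ ε * ‖vH‖) :
    (∃! uHm : V, uHm ∈ Set.range π ∧
        ∀ v ∈ Set.range π, B (uHm + Km uHm) (v + Km v) = F (v + Km v)) ∧
      (∀ uHm : V,
        (uHm ∈ Set.range π ∧
          ∀ v ∈ Set.range π, B (uHm + Km uHm) (v + Km v) = F (v + Km v)) →
        ‖u - (uHm + Km uHm)‖ ≤ (C_B / α) * (‖gF‖ + ε * ‖π u‖)) := by
  -- basic algebraic consequences
  have hneg₁ : ∀ x w : V, B (-x) w = -(B x w) := by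
    intro x w
    have h := hsmul₁ (-1) x w
    simpa using h
  have hsub₁ : ∀ x y w : V, B (x - y) w = B x w - B y w := by
    intro x y w
    rw [sub_eq_add_neg, hadd₁, hneg₁, sub_eq_add_neg]
  -- the range as a set of fixed points
  have hfix : ∀ v : V, v ∈ Set.range ⇑π ↔ π v = v := by
    intro v
    constructor
    · rintro ⟨w, rfl⟩; exact hπ w
    · intro h; exact ⟨v, h⟩
  -- range is a submodule
  have hmemrange : ∀ v : V, v ∈ LinearMap.range (π : V →ₗ[ℂ] V) ↔ v ∈ Set.range ⇑π := by
    intro v; exact LinearMap.mem_range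
  set S : Submodule ℂ V := LinearMap.range (π : V →ₗ[ℂ] V) with hS
  have hSclosed : IsClosed (S : Set V) := by
    have : (S : Set V) = {v | π v = v} := by
      ext v
      simp only [SetLike.mem_coe, Set.mem_setOf_eq]
      rw [hmemrange, hfix]
    rw [this]
    exact isClosed_eq π.continuous continuous_id
  haveI : CompleteSpace S := hSclosed.completeSpace_coe
  -- sesquilinear form and functional on S
  set a : S → S → ℂ := fun x y => B ((x : V) + Km (x : V)) ((y : V) + Km (y : V)) with ha
  set f : S → ℂ := fun y => F ((y : V) + Km (y : V)) with hf
  have hT : ∀ (x y : S), ((x + y : S) : V) + Km ((x + y : S) : V)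
      = ((x : V) + Km (x : V)) + ((y : V) + Km (y : V)) := by
    intro x y
    push_cast
    rw [map_add]
    abel
  have hTs : ∀ (c : ℂ) (x : S), ((c • x : S) : V) + Km ((c • x : S) : V)
      = c • ((x : V) + Km (x : V)) := by
    intro c x
    push_cast
    rw [map_smul, smul_add]
  have hTle : ∀ x : S, ‖(x : V) + Km (x : V)‖ ≤ (1 + ‖Km‖) * ‖x‖ := by
    intro x
    calc ‖(x : V) + Km (x : V)‖ ≤ ‖(x : V)‖ + ‖Km (x : V)‖ := norm_add_le _ _
      _ ≤ ‖(x : V)‖ + ‖Km‖ * ‖(x : V)‖ := by linarith [Km.le_opNorm (x : V)]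
      _ = (1 + ‖Km‖) * ‖x‖ := by rw [Submodule.coe_norm]; ring
  have hxmem : ∀ x : S, (x : V) ∈ Set.range ⇑π := fun x => (hmemrange _).mp x.2
  have hTge : ∀ x : S, ‖x‖ ≤ (1 + ‖π‖) * ‖(x : V) + Km (x : V)‖ := by
    intro x
    have h1 : π ((x : V) + Km (x : V)) = (x : V) := by
      rw [map_add, hKm₀ _ (hxmem x), add_zero, (hfix _).mp (hxmem x)]
    calc ‖x‖ = ‖π ((x : V) + Km (x : V))‖ := by rw [h1, Submodule.coe_norm]
      _ ≤ ‖π‖ * ‖(x : V) + Km (x : V)‖ := π.le_opNorm _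
      _ ≤ (1 + ‖π‖) * ‖(x : V) + Km (x : V)‖ := by
          have := norm_nonneg ((x : V) + Km (x : V)); nlinarith
  -- apply the abstract Lax–Milgram lemma
  have hexu : ∃! x : S, ∀ y : S, a x y = f y := by
    apply aux_complex_lax_milgram a (C_B * (1 + ‖Km‖) ^ 2) (α / (1 + ‖π‖) ^ 2)
    · positivity
    · intro x x' y
      rw [ha]
      dsimp only
      rw [hT, hadd₁]
    · intro c x y
      rw [ha]
      dsimp only
      rw [hTs, hsmul₁]
    · intro x y y'
      rw [ha]
      dsimp only
      rw [hT, hadd₂]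
    · intro c x y
      rw [ha]
      dsimp only
      rw [hTs, hsmul₂]
    · intro x y
      have h1 := hbound ((x : V) + Km (x : V)) ((y : V) + Km (y : V))
      have h2 := hTle x
      have h3 := hTle y
      have h4 : (0:ℝ) ≤ ‖Km‖ := norm_nonneg _
      have h5 : (0:ℝ) ≤ ‖x‖ := norm_nonneg _
      have h6 : (0:ℝ) ≤ ‖y‖ := norm_nonneg _
      have h7 : (0:ℝ) ≤ ‖(x : V) + Km (x : V)‖ := norm_nonneg _
      have h8 : (0:ℝ) ≤ ‖(y : V) + Km (y : V)‖ := norm_nonneg _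
      rw [ha]
      dsimp only
      nlinarith [mul_le_mul_of_nonneg_left (mul_le_mul h2 h3 h8 (by positivity)) hC_B.le]
    · intro x
      rw [ha]
      dsimp only
      rw [div_mul_eq_mul_div, div_le_iff₀ (by positivity)]
      have h1 := hcoer ((x : V) + Km (x : V))
      have h2 := hTge x
      have h3 : (0:ℝ) ≤ ‖x‖ := norm_nonneg _
      have h4 : (0:ℝ) ≤ ‖(x : V) + Km (x : V)‖ := norm_nonneg _
      have h5 : (0:ℝ) ≤ 1 + ‖π‖ := by positivity
      nlinarith [mul_le_mul_of_nonneg_left (mul_le_mul h2 h2 h3 (by positivity)) hα.le,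
        mul_le_mul_of_nonneg_left h1 (by positivity : (0:ℝ) ≤ (1 + ‖π‖) ^ 2)]
    · intro y y'
      rw [hf]
      dsimp only
      rw [hT, map_add]
    · intro c y
      rw [hf]
      dsimp only
      rw [hTs, map_smulₛₗ, smul_eq_mul]
    · exact fun y => by
        rw [hf]
        dsimp only
        calc ‖F ((y : V) + Km (y : V))‖ ≤ ‖F‖ * ‖(y : V) + Km (y : V)‖ := F.le_opNorm _
          _ ≤ ‖F‖ * ((1 + ‖Km‖) * ‖y‖) :=
              mul_le_mul_of_nonneg_left (hTle y) (norm_nonneg _)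
          _ = ‖F‖ * (1 + ‖Km‖) * ‖y‖ := by ring
  obtain ⟨x₀, hx₀, hx₀u⟩ := hexu
  constructor
  · refine ⟨(x₀ : V), ⟨hxmem x₀, ?_⟩, ?_⟩
    · intro v hv
      exact hx₀ ⟨v, (hmemrange v).mpr hv⟩
    · intro v ⟨hvmem, hveq⟩
      have : (⟨v, (hmemrange v).mpr hvmem⟩ : S) = x₀ := by
        apply hx₀u
        intro y
        exact hveq (y : V) (hxmem y)
      exact congrArg Subtype.val this
  -- error estimate
  · rintro uHm ⟨hmem, heq⟩
    set uH := π u with huHdef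
    have huHmem : uH ∈ Set.range ⇑π := ⟨u, rfl⟩
    -- ideal decomposition u = uH + K uH + gF
    have hr : u = uH + K uH + gF := by
      set r := u - (uH + K uH + gF) with hrdef
      have hπr : π r = 0 := by
        rw [hrdef, map_sub, map_add, map_add, hK₀ uH huHmem, hgF₀, hπ u]
        abel
      have hBrw : ∀ w : V, π w = 0 → B r w = 0 := by
        intro w hw
        rw [hrdef, hsub₁, hadd₁, hadd₁, hu w, hK uH huHmem w hw, hgF w hw]
        ring
      have h0 : α * ‖r‖ ^ 2 ≤ 0 := by
        have := hcoer r
        rw [hBrw r hπr, norm_zero] at this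
        linarith
      have hrn : ‖r‖ = 0 := by
        have h2 : ‖r‖ ^ 2 ≤ 0 := by nlinarith
        have h3 : ‖r‖ ^ 2 = 0 := le_antisymm h2 (sq_nonneg _)
        exact pow_eq_zero_iff (two_ne_zero) |>.mp h3
      have : r = 0 := norm_eq_zero.mp hrn
      rw [hrdef] at this
      exact (sub_eq_zero.mp this)
    -- Galerkin orthogonality
    have hgal : ∀ v ∈ Set.range ⇑π, B (u - (uHm + Km uHm)) (v + Km v) = 0 := by
      intro v hv
      rw [hsub₁, hu, heq v hv, sub_self]
    set e := u - (uHm + Km uHm) with hedef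
    set D := ‖gF‖ + ε * ‖π u‖ with hDdef
    have hD : 0 ≤ D := add_nonneg (norm_nonneg _) (mul_nonneg hε (norm_nonneg _))
    have hnorm : ‖u - (uH + Km uH)‖ ≤ D := by
      have hid : u - (uH + Km uH) = gF + (K uH - Km uH) := by rw [hr]; abel
      rw [hid]
      calc ‖gF + (K uH - Km uH)‖ ≤ ‖gF‖ + ‖K uH - Km uH‖ := norm_add_le _ _
        _ ≤ ‖gF‖ + ε * ‖uH‖ := by linarith [happrox uH huHmem]
        _ = D := by rw [hDdef, huHdef]
    have hmem' : uH - uHm ∈ Set.range ⇑π := by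
      obtain ⟨w₀, hw₀⟩ := hmem
      exact ⟨u - w₀, by rw [map_sub, hw₀]⟩
    have hBee : B e e = B e (u - (uH + Km uH)) := by
      have h2 := hgal (uH - uHm) hmem'
      have h3 : e = (u - (uH + Km uH)) + ((uH - uHm) + Km (uH - uHm)) := by
        rw [hedef, map_sub]; abel
      calc B e e = B e ((u - (uH + Km uH)) + ((uH - uHm) + Km (uH - uHm))) := by
            rw [← h3]
        _ = B e (u - (uH + Km uH)) + B e ((uH - uHm) + Km (uH - uHm)) := hadd₂ _ _ _
        _ = B e (u - (uH + Km uH)) := by rw [hedef] at h2 ⊢; rw [h2, add_zero]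
    have hfinal : α * ‖e‖ ^ 2 ≤ C_B * ‖e‖ * D := by
      calc α * ‖e‖ ^ 2 ≤ ‖B e e‖ := hcoer e
        _ = ‖B e (u - (uH + Km uH))‖ := by rw [hBee]
        _ ≤ C_B * ‖e‖ * ‖u - (uH + Km uH)‖ := hbound _ _
        _ ≤ C_B * ‖e‖ * D := by
            apply mul_le_mul_of_nonneg_left hnorm
            positivity
    rw [div_mul_eq_mul_div, le_div_iff₀ hα]
    rcases eq_or_lt_of_le (norm_nonneg e) with h | h
    · rw [← h]
      have : 0 ≤ C_B * D := mul_nonneg hC_B.le hD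
      nlinarith
    · nlinarith
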